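/- Let n, k, j, i be integers with n ≥ k > 0, 0 ≤ j < n, j ≤ n (so that (n,k)∖(j) is a valid skew shape, where if j ≥ k the second row is a full row of k boxes) and i ≥ 1. Then the distribution of the major index over standard Young tableaux of skew shape (n,k)∖(j) with exactly i descents satisfies f_{(n,k)∖(j),i}(q) = q^{i²}·( [n−j choose i]_q·[k choose i]_q − [n+1 choose i]_q·[k−j−1 choose i]_q ) as polynomials in q. -/
import Mathlib


open Polynomial
open scoped Classical

noncomputable section

/-- The set of cells of the skew shape `outer \ inner`, where `outer` and `inner` are
lists of row lengths (rows and columns are 0-indexed): the cell `(r, c)` is present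
iff `inner.getD r 0 ≤ c < outer.getD r 0`. -/
def skewCells (outer inner : List ℕ) : Finset (ℕ × ℕ) :=
  ((Finset.range outer.length) ×ˢ (Finset.range (outer.foldr max 0))).filter
    (fun p => inner.getD p.1 0 ≤ p.2 ∧ p.2 < outer.getD p.1 0)

/-- `pos` encodes a standard Young tableau of skew shape `outer \ inner`:
`pos k` is the cell containing the entry `k + 1`.  The conditions say that the
entries are a bijective filling which increases left to right along rows and
top to bottom down columns. -/
def IsSYT (outer inner : List ℕ)
    (pos : Fin (skewCells outer inner).card → ↥(skewCells outer inner)) : Prop :=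
  Function.Injective pos ∧
  (∀ a b, ((pos a : ℕ × ℕ)).1 = ((pos b : ℕ × ℕ)).1 →
      ((pos a : ℕ × ℕ)).2 < ((pos b : ℕ × ℕ)).2 → a < b) ∧
  (∀ a b, ((pos a : ℕ × ℕ)).2 = ((pos b : ℕ × ℕ)).2 →
      ((pos a : ℕ × ℕ)).1 < ((pos b : ℕ × ℕ)).1 → a < b)

/-- The finite set of standard Young tableaux of skew shape `outer \ inner`. -/
def SYTs (outer inner : List ℕ) :
    Finset (Fin (skewCells outer inner).card → ↥(skewCells outer inner)) :=
  Finset.univ.filter (IsSYT outer inner)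

/-- The descent set of the tableau `pos`: the values `v` such that `v + 1` lies in a
strictly lower row than `v` (entry `v` is at index `v - 1`, entry `v+1` at index `v`). -/
def desSet (outer inner : List ℕ)
    (pos : Fin (skewCells outer inner).card → ↥(skewCells outer inner)) : Finset ℕ :=
  (Finset.range (skewCells outer inner).card).filter
    (fun v => ∃ a b : Fin (skewCells outer inner).card,
      (a : ℕ) + 1 = v ∧ (b : ℕ) = v ∧ ((pos a : ℕ × ℕ)).1 < ((pos b : ℕ × ℕ)).1)

/-- The major index of a tableau: the sum of its descents. -/
def majStat (outer inner : List ℕ)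
    (pos : Fin (skewCells outer inner).card → ↥(skewCells outer inner)) : ℕ :=
  (desSet outer inner pos).sum id

/-- The number of descents of a tableau. -/
def desStat (outer inner : List ℕ)
    (pos : Fin (skewCells outer inner).card → ↥(skewCells outer inner)) : ℕ :=
  (desSet outer inner pos).card

/-- `f_{outer∖inner, i}(q) = Σ_{τ ∈ SYT(outer∖inner), des(τ) = i} q^{maj(τ)} ∈ ℤ[q]`. -/
def fSkew (outer inner : List ℕ) (i : ℕ) : Polynomial ℤ :=
  ∑ pos ∈ (SYTs outer inner).filter (fun pos => desStat outer inner pos = i),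
    X ^ majStat outer inner pos

/-- `f_{λ, i}(q)` for a straight (non-skew) shape `λ`. -/
def fPoly (lam : List ℕ) (i : ℕ) : Polynomial ℤ := fSkew lam [] i

/-- Gaussian binomial coefficients for natural arguments, via the q-Pascal recurrence
`[M+1, N+1]_q = [M, N+1]_q + q^(M-N) [M, N]_q`, with `[M, 0]_q = 1`, `[0, N+1]_q = 0`. -/
def qBinomAux : ℕ → ℕ → Polynomial ℤ
  | _, 0 => 1
  | 0, _ + 1 => 0
  | M + 1, N + 1 => qBinomAux M (N + 1) + X ^ (M - N) * qBinomAux M N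

/-- Gaussian binomial coefficient `[M choose N]_q ∈ ℤ[q]`, with the convention that
it is `0` unless `0 ≤ N ≤ M`. -/
def qBinom (M N : ℤ) : Polynomial ℤ :=
  if 0 ≤ N ∧ N ≤ M then qBinomAux M.toNat N.toNat else 0

namespace Stmt5


def qBn (A : ℤ) (i : ℕ) : Polynomial ℤ := qBinom A (i : ℤ)

lemma qA_zero_right (M : ℕ) : qBinomAux M 0 = 1 := by cases M <;> rfl

lemma qA_succ (M N : ℕ) :
    qBinomAux (M+1) (N+1) = qBinomAux M (N+1) + X ^ (M - N) * qBinomAux M N := rfl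

lemma qA_eq_zero_of_lt : ∀ {M N : ℕ}, M < N → qBinomAux M N = 0 := by
  intro M
  induction M with
  | zero => intro N h; obtain ⟨N', rfl⟩ := Nat.exists_eq_succ_of_ne_zero (by omega : N ≠ 0); rfl
  | succ M ih =>
      intro N h
      obtain ⟨N', rfl⟩ := Nat.exists_eq_succ_of_ne_zero (by omega : N ≠ 0)
      rw [qA_succ, ih (by omega), ih (by omega)]
      ring

lemma qBn_natCast (M : ℕ) (i : ℕ) : qBn (M : ℤ) i = qBinomAux M i := by
  unfold qBn qBinom
  by_cases h : i ≤ M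
  · rw [if_pos ⟨Int.natCast_nonneg i, by exact_mod_cast h⟩, Int.toNat_natCast, Int.toNat_natCast]
  · rw [if_neg (by rintro ⟨h1, h2⟩; omega), qA_eq_zero_of_lt (by omega)]

lemma qBn_zero_right (A : ℤ) (h : 0 ≤ A) : qBn A 0 = 1 := by
  unfold qBn qBinom
  rw [Nat.cast_zero, if_pos ⟨le_refl 0, h⟩, Int.toNat_zero, qA_zero_right]

lemma qBn_eq_zero (A : ℤ) (i : ℕ) (h : A < i) : qBn A i = 0 := by
  unfold qBn qBinom
  rw [if_neg (by rintro ⟨h1, h2⟩; omega)]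

/-- master recurrence, natural-number core -/
lemma masterNat (a b i : ℕ) :
    X^((i+1)^2) * (qBinomAux (a+1) (i+1) * qBinomAux (b+1) (i+1))
      = X^((i+1)^2) * (qBinomAux a (i+1) * qBinomAux (b+1) (i+1)
          + qBinomAux (a+1) (i+1) * qBinomAux b (i+1)
          - qBinomAux a (i+1) * qBinomAux b (i+1))
        + X^(a+b+1) * (X^(i^2) * (qBinomAux a i * qBinomAux b i)) := by
  rw [qA_succ a i, qA_succ b i]
  by_cases ha : i ≤ a
  · by_cases hb : i ≤ b
    · have h1 : (i+1)^2 + ((a - i) + (b - i)) = a + b + 1 + i^2 := by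
        have : (i+1)^2 = i^2 + 2*i + 1 := by ring
        omega
      have h2 : X^((i+1)^2) * (X ^ (a-i) * qBinomAux a i * (X ^ (b-i) * qBinomAux b i))
          = X^(a+b+1) * (X^(i^2) * (qBinomAux a i * qBinomAux b i)) := by
        have e1 : X^((i+1)^2) * (X ^ (a-i) * qBinomAux a i * (X ^ (b-i) * qBinomAux b i))
            = X^((i+1)^2 + ((a-i) + (b-i))) * (qBinomAux a i * qBinomAux b i) := by
          rw [pow_add, pow_add]; ring
        have e2 : X^(a+b+1) * (X^(i^2) * (qBinomAux a i * qBinomAux b i))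
            = X^(a+b+1+i^2) * (qBinomAux a i * qBinomAux b i) := by
          rw [pow_add]; ring
        rw [e1, e2, h1]
      linear_combination h2
    · rw [qA_eq_zero_of_lt (show b < i from by omega), qA_eq_zero_of_lt (show b < i+1 from by omega)]
      ring
  · rw [qA_eq_zero_of_lt (show a < i from by omega), qA_eq_zero_of_lt (show a < i+1 from by omega)]
    ring

/-- master recurrence over ℤ -/
lemma master (A B : ℤ) (hA : 1 ≤ A) (e : ℕ) (he : (e:ℤ) = A + B - 1) (i : ℕ) :
    X^(i^2) * (qBn A i * qBn B i)
      = X^(i^2) * (qBn (A-1) i * qBn B i + qBn A i * qBn (B-1) i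
          - qBn (A-1) i * qBn (B-1) i)
        + (if 1 ≤ i then X^e * (X^((i-1)^2) * (qBn (A-1) (i-1) * qBn (B-1) (i-1))) else 0) := by
  cases i with
  | zero =>
      rw [if_neg (by omega)]
      rw [qBn_zero_right A (by omega), qBn_zero_right (A-1) (by omega)]
      by_cases hB : 0 ≤ B - 1
      · rw [qBn_zero_right B (by omega), qBn_zero_right (B-1) hB]; ring
      · rw [qBn_eq_zero (B-1) 0 (by push_cast; omega)]
        by_cases hB0 : 0 ≤ B
        · rw [qBn_zero_right B hB0]; ring
        · rw [qBn_eq_zero B 0 (by push_cast; omega)]; ring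
  | succ i' =>
      rw [if_pos (by omega), Nat.succ_sub_one]
      by_cases hB : 1 ≤ B
      · obtain ⟨a, rfl⟩ : ∃ a : ℕ, A = (a:ℤ) + 1 := ⟨(A-1).toNat, by omega⟩
        obtain ⟨b, rfl⟩ : ∃ b : ℕ, B = (b:ℤ) + 1 := ⟨(B-1).toNat, by omega⟩
        have hea : e = a + b + 1 := by omega
        subst hea
        have c1 : (a:ℤ) + 1 = ((a+1 : ℕ) : ℤ) := by push_cast; ring
        have c2 : (b:ℤ) + 1 = ((b+1 : ℕ) : ℤ) := by push_cast; ring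
        have c3 : (a:ℤ) + 1 - 1 = ((a : ℕ) : ℤ) := by push_cast; ring
        have c4 : (b:ℤ) + 1 - 1 = ((b : ℕ) : ℤ) := by push_cast; ring
        simp only [c3, c4]; simp only [c1, c2]; simp only [qBn_natCast]
        exact masterNat a b i'
      · rw [qBn_eq_zero B (i'+1) (by push_cast; omega),
          qBn_eq_zero (B-1) (i'+1) (by push_cast; omega)]
        have h0 : qBn (B-1) i' = 0 := qBn_eq_zero (B-1) i' (by push_cast; omega)
        rw [h0]
        ring

/-- the RHS polynomial -/
def Fp (j : ℕ) (a b : ℤ) (i : ℕ) : Polynomial ℤ :=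
  X^(i^2) * (qBn a i * qBn b i - qBn (a+j+1) i * qBn (b-(j:ℤ)-1) i)

lemma Frec (j : ℕ) (a b : ℕ) (ha : 1 ≤ a) (hb : 1 ≤ b) (i : ℕ) :
    Fp j a b i = Fp j ((a:ℤ)-1) b i + Fp j a ((b:ℤ)-1) i - Fp j ((a:ℤ)-1) ((b:ℤ)-1) i
      + (if 1 ≤ i then X^(a+b-1) * Fp j ((a:ℤ)-1) ((b:ℤ)-1) (i-1) else 0) := by
  have e1 := master (a:ℤ) (b:ℤ) (by exact_mod_cast ha) (a+b-1) (by push_cast; omega) i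
  have e2 := master ((a:ℤ)+j+1) ((b:ℤ)-j-1) (by omega) (a+b-1) (by push_cast; omega) i
  unfold Fp
  have r1 : (a:ℤ) - 1 + j + 1 = (a:ℤ) + j + 1 - 1 := by ring
  have r2 : (b:ℤ) - 1 - j - 1 = (b:ℤ) - j - 1 - 1 := by ring
  rw [r1, r2]
  by_cases hi : 1 ≤ i
  · rw [if_pos hi] at e1 e2 ⊢
    linear_combination e1 - e2
  · rw [if_neg hi] at e1 e2 ⊢
    linear_combination e1 - e2

/-- Fp for second argument 0 -/
lemma Fp_b_zero (j : ℕ) (a : ℕ) (i : ℕ) :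
    Fp j (a:ℤ) 0 i = if i = 0 then 1 else 0 := by
  unfold Fp
  have h2 : qBn ((0:ℤ)-(j:ℤ)-1) i = 0 := qBn_eq_zero _ _ (by push_cast; omega)
  rw [h2]
  cases i with
  | zero =>
      rw [if_pos rfl, qBn_zero_right 0 le_rfl, qBn_zero_right _ (by positivity)]
      ring
  | succ i' =>
      rw [if_neg (by omega), qBn_eq_zero 0 (i'+1) (by push_cast; omega)]
      ring



/-! word machinery -/

def wrd {m : ℕ} (w : Fin m → Bool) (p : ℕ) : Bool :=
  if h : p < m then w ⟨p, h⟩ else false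

def cntT {m : ℕ} (w : Fin m → Bool) (p : ℕ) : ℕ :=
  ((Finset.range p).filter (fun u => wrd w u = true)).card

def cntF {m : ℕ} (w : Fin m → Bool) (p : ℕ) : ℕ :=
  ((Finset.range p).filter (fun u => wrd w u = false)).card

def condW (j : ℕ) {m : ℕ} (w : Fin m → Bool) : Prop :=
  ∀ p, p ≤ m → cntT w p ≤ cntF w p + j

def desW {m : ℕ} (w : Fin m → Bool) : Finset ℕ :=
  (Finset.range m).filter (fun v => 1 ≤ v ∧ wrd w (v-1) = false ∧ wrd w v = true)

def Gm (j M b i : ℕ) : Polynomial ℤ :=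
  ∑ w ∈ (Finset.univ : Finset (Fin M → Bool)).filter
      (fun w => cntT w M = b ∧ condW j w ∧ (desW w).card = i),
    X ^ ((desW w).sum id)

variable {m : ℕ}

lemma cntT_add_cntF (w : Fin m → Bool) (p : ℕ) : cntT w p + cntF w p = p := by
  classical
  have h := Finset.card_filter_add_card_filter_not
    (s := Finset.range p) (p := fun u => wrd w u = true)
  rw [Finset.card_range] at h
  have e : Finset.filter (fun u => wrd w u = false) (Finset.range p)
      = Finset.filter (fun u => ¬ wrd w u = true) (Finset.range p) := by
    apply Finset.filter_congr; intro u _; simp [Bool.not_eq_true]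
  unfold cntT cntF
  rw [e]
  exact h

lemma cntT_le (w : Fin m → Bool) (p : ℕ) : cntT w p ≤ p :=
  le_trans (Nat.le_add_right _ _) (le_of_eq (cntT_add_cntF w p))

lemma cntT_mono (w : Fin m → Bool) {p q : ℕ} (h : p ≤ q) : cntT w p ≤ cntT w q :=
  Finset.card_le_card (Finset.filter_subset_filter _ (Finset.range_subset_range.2 h))

lemma cntF_mono (w : Fin m → Bool) {p q : ℕ} (h : p ≤ q) : cntF w p ≤ cntF w q :=
  Finset.card_le_card (Finset.filter_subset_filter _ (Finset.range_subset_range.2 h))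

lemma cntT_succ (w : Fin m → Bool) (p : ℕ) :
    cntT w (p+1) = cntT w p + (if wrd w p = true then 1 else 0) := by
  unfold cntT
  rw [Finset.range_add_one, Finset.filter_insert]
  by_cases h : wrd w p = true
  · rw [if_pos h, if_pos h, Finset.card_insert_of_notMem (by simp)]
  · rw [if_neg h, if_neg h, add_zero]

lemma cntF_succ (w : Fin m → Bool) (p : ℕ) :
    cntF w (p+1) = cntF w p + (if wrd w p = false then 1 else 0) := by
  unfold cntF
  rw [Finset.range_add_one, Finset.filter_insert]
  by_cases h : wrd w p = false
  · rw [if_pos h, if_pos h, Finset.card_insert_of_notMem (by simp)]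
  · rw [if_neg h, if_neg h, add_zero]

/-! snoc lemmas -/

lemma wrd_snoc_lt (w : Fin m → Bool) (c : Bool) {p : ℕ} (h : p < m) :
    wrd (Fin.snoc w c) p = wrd w p := by
  unfold wrd
  rw [dif_pos (by omega : p < m + 1), dif_pos h]
  have he : (⟨p, by omega⟩ : Fin (m+1)) = Fin.castSucc ⟨p, h⟩ := rfl
  rw [he, Fin.snoc_castSucc]

lemma wrd_snoc_last (w : Fin m → Bool) (c : Bool) :
    wrd (Fin.snoc w c) m = c := by
  unfold wrd
  rw [dif_pos (by omega : m < m + 1)]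
  have he : (⟨m, by omega⟩ : Fin (m+1)) = Fin.last m := rfl
  rw [he, Fin.snoc_last]

lemma wrd_ge (w : Fin m → Bool) {p : ℕ} (h : m ≤ p) : wrd w p = false := by
  unfold wrd; rw [dif_neg (by omega)]

lemma cntT_snoc (w : Fin m → Bool) (c : Bool) {p : ℕ} (h : p ≤ m) :
    cntT (Fin.snoc w c) p = cntT w p := by
  unfold cntT
  congr 1
  apply Finset.filter_congr
  intro u hu
  rw [Finset.mem_range] at hu
  rw [wrd_snoc_lt w c (by omega)]

lemma cntF_snoc (w : Fin m → Bool) (c : Bool) {p : ℕ} (h : p ≤ m) :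
    cntF (Fin.snoc w c) p = cntF w p := by
  unfold cntF
  congr 1
  apply Finset.filter_congr
  intro u hu
  rw [Finset.mem_range] at hu
  rw [wrd_snoc_lt w c (by omega)]

lemma cntT_snoc_top (w : Fin m → Bool) (c : Bool) :
    cntT (Fin.snoc w c) (m+1) = cntT w m + (if c = true then 1 else 0) := by
  rw [cntT_succ, wrd_snoc_last, cntT_snoc w c le_rfl]

lemma cntF_snoc_top (w : Fin m → Bool) (c : Bool) :
    cntF (Fin.snoc w c) (m+1) = cntF w m + (if c = false then 1 else 0) := by
  rw [cntF_succ, wrd_snoc_last, cntF_snoc w c le_rfl]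

lemma condW_snoc_false (j : ℕ) (w : Fin m → Bool) :
    condW j (Fin.snoc w false) ↔ condW j w := by
  constructor
  · intro h p hp
    have := h p (by omega)
    rwa [cntT_snoc w false hp, cntF_snoc w false hp] at this
  · intro h p hp
    by_cases hpm : p ≤ m
    · rw [cntT_snoc w false hpm, cntF_snoc w false hpm]; exact h p hpm
    · have hp1 : p = m + 1 := by omega
      subst hp1
      rw [cntT_snoc_top, cntF_snoc_top]
      simp only [if_neg (by simp : ¬ (false = true)), if_pos rfl, add_zero]
      have := h m le_rfl
      omega

lemma condW_snoc_true (j : ℕ) (w : Fin m → Bool) :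
    condW j (Fin.snoc w true) ↔ condW j w ∧ cntT w m + 1 ≤ cntF w m + j := by
  constructor
  · intro h
    constructor
    · intro p hp
      have := h p (by omega)
      rwa [cntT_snoc w true hp, cntF_snoc w true hp] at this
    · have := h (m+1) le_rfl
      rwa [cntT_snoc_top, cntF_snoc_top, if_pos rfl, if_neg (by simp), add_zero] at this
  · rintro ⟨h, h2⟩ p hp
    by_cases hpm : p ≤ m
    · rw [cntT_snoc w true hpm, cntF_snoc w true hpm]; exact h p hpm
    · have hp1 : p = m + 1 := by omega
      subst hp1
      rw [cntT_snoc_top, cntF_snoc_top, if_pos rfl, if_neg (by simp), add_zero]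
      omega

lemma desW_subset (w : Fin m → Bool) : desW w ⊆ Finset.range m :=
  Finset.filter_subset _ _

lemma desW_snoc_false (w : Fin m → Bool) : desW (Fin.snoc w false) = desW w := by
  unfold desW
  ext v
  simp only [Finset.mem_filter, Finset.mem_range]
  constructor
  · rintro ⟨hv, h1, h2, h3⟩
    have hvm : v < m := by
      rcases Nat.lt_or_ge v m with h | h
      · exact h
      · exfalso
        have : v = m := by omega
        subst this
        rw [wrd_snoc_last] at h3
        exact absurd h3 (by simp)
    refine ⟨hvm, h1, ?_, ?_⟩
    · rwa [wrd_snoc_lt w false (by omega : v - 1 < m)] at h2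
    · rwa [wrd_snoc_lt w false hvm] at h3
  · rintro ⟨hv, h1, h2, h3⟩
    exact ⟨by omega, h1, by rwa [wrd_snoc_lt w false (by omega)],
      by rwa [wrd_snoc_lt w false hv]⟩

lemma desW_snoc_true (w : Fin m → Bool) :
    desW (Fin.snoc w true) =
      if 1 ≤ m ∧ wrd w (m-1) = false then insert m (desW w) else desW w := by
  unfold desW
  ext v
  by_cases hc : 1 ≤ m ∧ wrd w (m-1) = false
  · rw [if_pos hc]
    simp only [Finset.mem_filter, Finset.mem_range, Finset.mem_insert]
    constructor
    · rintro ⟨hv, h1, h2, h3⟩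
      by_cases hvm : v < m
      · right
        refine ⟨hvm, h1, ?_, ?_⟩
        · rwa [wrd_snoc_lt w true (by omega)] at h2
        · rwa [wrd_snoc_lt w true hvm] at h3
      · left; omega
    · rintro (rfl | ⟨hv, h1, h2, h3⟩)
      · refine ⟨by omega, hc.1, ?_, ?_⟩
        · rw [wrd_snoc_lt w true (by omega)]; exact hc.2
        · rw [wrd_snoc_last]
      · exact ⟨by omega, h1, by rwa [wrd_snoc_lt w true (by omega)],
          by rwa [wrd_snoc_lt w true hv]⟩
  · rw [if_neg hc]
    simp only [Finset.mem_filter, Finset.mem_range]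
    constructor
    · rintro ⟨hv, h1, h2, h3⟩
      have hvm : v < m := by
        rcases Nat.lt_or_ge v m with h | h
        · exact h
        · have hvm' : v = m := by omega
          subst hvm'
          rw [wrd_snoc_lt w true (by omega)] at h2
          exact absurd ⟨h1, h2⟩ hc
      refine ⟨hvm, h1, ?_, ?_⟩
      · rwa [wrd_snoc_lt w true (by omega)] at h2
      · rwa [wrd_snoc_lt w true hvm] at h3
    · rintro ⟨hv, h1, h2, h3⟩
      exact ⟨by omega, h1, by rwa [wrd_snoc_lt w true (by omega)],
        by rwa [wrd_snoc_lt w true hv]⟩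

lemma notMem_desW (w : Fin m → Bool) : m ∉ desW w := fun h => by
  have := desW_subset w h; simp at this

/-! sum splitting -/

lemma sum_snoc (f : (Fin (m+1) → Bool) → Polynomial ℤ) :
    ∑ w : Fin (m+1) → Bool, f w
      = (∑ w : Fin m → Bool, f (Fin.snoc w false))
        + ∑ w : Fin m → Bool, f (Fin.snoc w true) := by
  rw [← (Fin.snocEquiv (fun _ => Bool)).sum_comp f, Fintype.sum_prod_type, Fintype.sum_bool]
  have h1 : ∀ c : Bool, (∑ w : Fin m → Bool, f (Fin.snocEquiv (fun _ => Bool) (c, w)))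
      = ∑ w : Fin m → Bool, f (Fin.snoc w c) :=
    fun c => Finset.sum_congr rfl (fun w _ => rfl)
  rw [h1, h1, add_comm]

lemma ite_split_bool {P : Prop} [Decidable P] (c : Bool) (A : Polynomial ℤ) :
    (if P then A else 0)
      = (if P ∧ c = false then A else 0) + (if P ∧ c = true then A else 0) := by
  cases c <;> by_cases h : P <;> simp [h]

lemma Gm_eq_sum (j M b i : ℕ) :
    Gm j M b i = ∑ w : Fin M → Bool,
      (if cntT w M = b ∧ condW j w ∧ (desW w).card = i
       then X ^ ((desW w).sum id) else 0) := by
  unfold Gm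
  rw [Finset.sum_filter]

/-- splitting off the last letter -/
lemma Gm_split (j m b i : ℕ) :
    Gm j (m+1) b i = Gm j m b i +
      ∑ w : Fin m → Bool,
        (if cntT w m + 1 = b ∧ condW j (Fin.snoc w true) ∧ (desW (Fin.snoc w true)).card = i
         then X ^ ((desW (Fin.snoc w true)).sum id) else 0) := by
  rw [Gm_eq_sum, sum_snoc]
  congr 1
  · rw [Gm_eq_sum]
    apply Finset.sum_congr rfl
    intro w _
    have h1 : cntT (Fin.snoc w false) (m+1) = cntT w m := by
      rw [cntT_snoc_top]; simp
    rw [desW_snoc_false, h1]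
    congr 1
    rw [condW_snoc_false]
  · apply Finset.sum_congr rfl
    intro w _
    have h1 : cntT (Fin.snoc w true) (m+1) = cntT w m + 1 := by
      rw [cntT_snoc_top]; simp
    rw [h1]

/-- sum over words ending in `false` -/
lemma Gm_endF (j m b i : ℕ) :
    (∑ w : Fin (m+1) → Bool,
      (if cntT w (m+1) = b ∧ condW j w ∧ (desW w).card = i ∧ wrd w m = false
       then X ^ ((desW w).sum id) else 0)) = Gm j m b i := by
  rw [sum_snoc (fun (w : Fin (m+1) → Bool) => if cntT w (m+1) = b ∧ condW j w ∧ (desW w).card = i ∧ wrd w m = false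
       then (X : Polynomial ℤ) ^ ((desW w).sum id) else 0)]
  have h2 : (∑ w : Fin m → Bool,
      (if cntT (Fin.snoc w true) (m+1) = b ∧ condW j (Fin.snoc w true)
          ∧ (desW (Fin.snoc w true)).card = i ∧ wrd (Fin.snoc w true) m = false
       then X ^ ((desW (Fin.snoc w true)).sum id) else 0)) = (0 : Polynomial ℤ) := by
    apply Finset.sum_eq_zero
    intro w _
    rw [if_neg]
    rintro ⟨-, -, -, h⟩
    rw [wrd_snoc_last] at h
    exact absurd h (by simp)
  rw [h2, add_zero, Gm_eq_sum]
  apply Finset.sum_congr rfl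
  intro w _
  have h1 : cntT (Fin.snoc w false) (m+1) = cntT w m := by rw [cntT_snoc_top]; simp
  rw [desW_snoc_false, h1, wrd_snoc_last]
  congr 1
  rw [condW_snoc_false]
  simp


lemma Gm_split_end (j m b i : ℕ) :
    Gm j (m+1) b i = Gm j m b i +
      ∑ w : Fin (m+1) → Bool,
        (if cntT w (m+1) = b ∧ condW j w ∧ (desW w).card = i ∧ wrd w m = true
         then X ^ ((desW w).sum id) else 0) := by
  rw [Gm_eq_sum, ← Gm_endF j m b i, ← Finset.sum_add_distrib]
  apply Finset.sum_congr rfl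
  intro w _
  by_cases hP : cntT w (m+1) = b ∧ condW j w ∧ (desW w).card = i
  · cases hw : wrd w m <;> simp [hP.1, hP.2.1, hP.2.2, hw]
  · rw [if_neg hP, if_neg (fun h => hP ⟨h.1, h.2.1, h.2.2.1⟩),
      if_neg (fun h => hP ⟨h.1, h.2.1, h.2.2.1⟩), add_zero]

lemma trueBranch (j m b i : ℕ) (hyp : 2*b + 1 ≤ m + 1 + j) :
    (∑ w : Fin (m+1) → Bool,
      (if cntT w (m+1) + 1 = b + 1 ∧ condW j (Fin.snoc w true)
          ∧ (desW (Fin.snoc w true)).card = i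
       then X ^ ((desW (Fin.snoc w true)).sum id) else 0))
    = (if 1 ≤ i then X^(m+1) * Gm j m b (i-1) else 0)
      + (Gm j (m+1) b i - Gm j m b i) := by
  have key : ∀ w : Fin (m+1) → Bool,
      (if cntT w (m+1) + 1 = b + 1 ∧ condW j (Fin.snoc w true)
          ∧ (desW (Fin.snoc w true)).card = i
       then (X : Polynomial ℤ) ^ ((desW (Fin.snoc w true)).sum id) else 0)
      = (if cntT w (m+1) = b ∧ condW j w ∧ (desW w).card + 1 = i ∧ wrd w m = false
         then X^(m+1) * X ^ ((desW w).sum id) else 0)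
        + (if cntT w (m+1) = b ∧ condW j w ∧ (desW w).card = i ∧ wrd w m = true
           then X ^ ((desW w).sum id) else 0) := by
    intro w
    have htot := cntT_add_cntF w (m+1)
    have hle := cntT_le w (m+1)
    have hcw := condW_snoc_true j w
    have hd := desW_snoc_true w
    by_cases hw : wrd w m = false
    · have hd' : desW (Fin.snoc w true) = insert (m+1) (desW w) := by
        rw [hd, if_pos ⟨by omega, by simpa using hw⟩]
      have hnm : (m+1) ∉ desW w := fun hmem => by
        have := desW_subset w hmem; rw [Finset.mem_range] at this; omega
      have hcard : (desW (Fin.snoc w true)).card = (desW w).card + 1 := by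
        rw [hd', Finset.card_insert_of_notMem hnm]
      have hsum : (desW (Fin.snoc w true)).sum id = (m+1) + (desW w).sum id := by
        rw [hd', Finset.sum_insert hnm]; rfl
      by_cases h1 : cntT w (m+1) = b
      · have hineq : cntT w (m+1) + 1 ≤ cntF w (m+1) + j := by omega
        by_cases h2 : condW j w
        · by_cases h3 : (desW w).card + 1 = i
          · rw [if_pos ⟨by omega, hcw.mpr ⟨h2, hineq⟩, by rw [hcard]; exact h3⟩,
              if_pos ⟨h1, h2, h3, hw⟩,
              if_neg (fun h => by have hcon := h.2.2.2; rw [hw] at hcon; simp at hcon),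
              hsum, pow_add, add_zero]
          · rw [if_neg (fun h => h3 (by rw [← hcard]; exact h.2.2)),
              if_neg (fun h => h3 h.2.2.1),
              if_neg (fun h => by have hcon := h.2.2.2; rw [hw] at hcon; simp at hcon), add_zero]
        · rw [if_neg (fun h => h2 (hcw.mp h.2.1).1),
            if_neg (fun h => h2 h.2.1), if_neg (fun h => h2 h.2.1), add_zero]
      · rw [if_neg (fun h => h1 (by omega)), if_neg (fun h => h1 h.1),
          if_neg (fun h => h1 h.1), add_zero]
    · have hw' : wrd w m = true := by simpa using hw
      have hd' : desW (Fin.snoc w true) = desW w := by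
        rw [hd, if_neg]
        rintro ⟨-, hcon⟩
        rw [Nat.add_sub_cancel, hw'] at hcon
        simp at hcon
      by_cases h1 : cntT w (m+1) = b
      · have hineq : cntT w (m+1) + 1 ≤ cntF w (m+1) + j := by omega
        by_cases h2 : condW j w
        · by_cases h3 : (desW w).card = i
          · rw [if_pos ⟨by omega, hcw.mpr ⟨h2, hineq⟩, by rw [hd']; exact h3⟩,
              if_neg (fun h => by have hcon := h.2.2.2; rw [hw'] at hcon; simp at hcon),
              if_pos ⟨h1, h2, h3, hw'⟩, hd', zero_add]
          · rw [if_neg (fun h => h3 (by rw [← hd']; exact h.2.2)),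
              if_neg (fun h => by have hcon := h.2.2.2; rw [hw'] at hcon; simp at hcon),
              if_neg (fun h => h3 h.2.2.1), add_zero]
        · rw [if_neg (fun h => h2 (hcw.mp h.2.1).1),
            if_neg (fun h => h2 h.2.1), if_neg (fun h => h2 h.2.1), add_zero]
      · rw [if_neg (fun h => h1 (by omega)), if_neg (fun h => h1 h.1),
          if_neg (fun h => h1 h.1), add_zero]
  rw [Finset.sum_congr rfl (fun w _ => key w), Finset.sum_add_distrib]
  congr 1
  · cases i with
    | zero =>
        rw [if_neg (by omega)]
        apply Finset.sum_eq_zero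
        intro w _
        rw [if_neg (fun h => by omega)]
    | succ i' =>
        rw [if_pos (by omega)]
        have : ∀ w : Fin (m+1) → Bool,
            (if cntT w (m+1) = b ∧ condW j w ∧ (desW w).card + 1 = i' + 1 ∧ wrd w m = false
             then (X:Polynomial ℤ)^(m+1) * X ^ ((desW w).sum id) else 0)
            = X^(m+1) * (if cntT w (m+1) = b ∧ condW j w ∧ (desW w).card = i' ∧ wrd w m = false
               then X ^ ((desW w).sum id) else 0) := by
          intro w
          by_cases h : cntT w (m+1) = b ∧ condW j w ∧ (desW w).card = i' ∧ wrd w m = false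
          · rw [if_pos ⟨h.1, h.2.1, by omega, h.2.2.2⟩, if_pos h]
          · rw [if_neg (fun hh => h ⟨hh.1, hh.2.1, by omega, hh.2.2.2⟩), if_neg h, mul_zero]
        rw [Finset.sum_congr rfl (fun w _ => this w), ← Finset.mul_sum]
        congr 1
        exact Gm_endF j m b i'
  · rw [Gm_split_end j m b i]; ring

lemma Gm_void (j M b i : ℕ) (h : M + j < 2*b) : Gm j M b i = 0 := by
  rw [Gm_eq_sum]
  apply Finset.sum_eq_zero
  intro w _
  rw [if_neg]
  rintro ⟨h1, h2, -⟩
  have hle := cntT_le w M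
  have htot := cntT_add_cntF w M
  have := h2 M le_rfl
  omega

lemma Gm_base (j i : ℕ) : Gm j 0 0 i = if i = 0 then 1 else 0 := by
  rw [Gm_eq_sum]
  rw [Fintype.sum_eq_single (fun x : Fin 0 => x.elim0)]
  · have h1 : cntT (fun x : Fin 0 => x.elim0) 0 = 0 := by
      unfold cntT; simp
    have h2 : condW j (fun x : Fin 0 => x.elim0) := by
      intro p hp
      have hp0 : p = 0 := by omega
      subst hp0
      simp [cntT]
    have h3 : desW (fun x : Fin 0 => x.elim0) = ∅ := by
      unfold desW; simp
    rw [h3]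
    by_cases hi : i = 0
    · rw [if_pos ⟨h1, h2, by simp [hi]⟩, if_pos hi]; simp
    · rw [if_neg (fun h => hi (by simpa using h.2.2.symm)), if_neg hi]
  · intro w hw
    exfalso
    exact hw (by funext x; exact x.elim0)

lemma cntT_allTrue (M p : ℕ) (hp : p ≤ M) : cntT (fun _ : Fin M => true) p = p := by
  unfold cntT
  rw [Finset.filter_true_of_mem, Finset.card_range]
  intro u hu
  rw [Finset.mem_range] at hu
  unfold wrd
  rw [dif_pos (by omega)]

lemma Gm_allTrue (j b i : ℕ) (hb1 : 1 ≤ b) (hbj : b ≤ j) :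
    Gm j b b i = if i = 0 then 1 else 0 := by
  rw [Gm_eq_sum]
  rw [Fintype.sum_eq_single (fun _ : Fin b => true)]
  · have h1 : cntT (fun _ : Fin b => true) b = b := cntT_allTrue b b le_rfl
    have h2 : condW j (fun _ : Fin b => true) := by
      intro p hp
      rw [cntT_allTrue b p hp]
      omega
    have h3 : desW (fun _ : Fin b => true) = ∅ := by
      unfold desW
      rw [Finset.filter_false_of_mem]
      intro v hv
      rw [Finset.mem_range] at hv
      rintro ⟨hv1, hv2, -⟩
      unfold wrd at hv2
      rw [dif_pos (by omega)] at hv2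
      simp at hv2
    rw [h3]
    by_cases hi : i = 0
    · rw [if_pos ⟨h1, h2, by simp [hi]⟩, if_pos hi]; simp
    · rw [if_neg (fun h => hi (by simpa using h.2.2.symm)), if_neg hi]
  · intro w hw
    rw [if_neg]
    rintro ⟨h1, -, -⟩
    apply hw
    funext v
    have htot := cntT_add_cntF w b
    have hF : cntF w b = 0 := by omega
    have : ∀ u ∈ Finset.range b, ¬ (wrd w u = false) := by
      intro u hu hfu
      have : (Finset.filter (fun u => wrd w u = false) (Finset.range b)).Nonempty :=
        ⟨u, Finset.mem_filter.mpr ⟨hu, hfu⟩⟩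
      have := Finset.card_pos.mpr this
      unfold cntF at hF
      omega
    have hv := this v (Finset.mem_range.mpr v.isLt)
    unfold wrd at hv
    rw [dif_pos v.isLt] at hv
    simp only [Fin.eta] at hv
    simpa using hv


lemma Fp_void (j a b i : ℕ) (h : b = a + j + 1) : Fp j a b i = 0 := by
  unfold Fp
  have e1 : (a:ℤ) + j + 1 = (b:ℤ) := by push_cast; omega
  have e2 : (b:ℤ) - j - 1 = (a:ℤ) := by push_cast; omega
  rw [e1, e2]
  ring

lemma Fp_a0 (j b i : ℕ) (hbj : b ≤ j) : Fp j 0 b i = if i = 0 then 1 else 0 := by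
  unfold Fp
  have e2 : qBn ((b:ℤ) - (j:ℤ) - 1) i = 0 := qBn_eq_zero _ _ (by push_cast; omega)
  rw [e2]
  cases i with
  | zero =>
      rw [if_pos rfl, qBn_zero_right 0 le_rfl, qBn_zero_right _ (Int.natCast_nonneg b)]
      ring
  | succ i' =>
      rw [if_neg (by omega), qBn_eq_zero 0 (i'+1) (by push_cast; omega)]
      ring

lemma LemW (j : ℕ) : ∀ N a b i, a + b = N → b ≤ a + j + 1 →
    Gm j (a+b) b i = Fp j (a:ℤ) (b:ℤ) i := by
  intro N
  induction N using Nat.strong_induction_on with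
  | _ N IH =>
    intro a b i hN hb
    cases b with
    | zero =>
        simp only [Nat.cast_zero]
        induction a with
        | zero => rw [Gm_base, Fp_b_zero]
        | succ a' iha =>
            clear iha
            simp only [Nat.add_zero]
            rw [Gm_split j a' 0 i]
            have hz : (∑ w : Fin a' → Bool,
                (if cntT w a' + 1 = 0 ∧ condW j (Fin.snoc w true)
                    ∧ (desW (Fin.snoc w true)).card = i
                 then (X : Polynomial ℤ) ^ ((desW (Fin.snoc w true)).sum id) else 0)) = 0 :=
              Finset.sum_eq_zero (fun w _ => if_neg (fun h => by omega))
            rw [hz, add_zero]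
            have h0 : Gm j a' 0 i = Fp j (a':ℤ) ((0:ℕ):ℤ) i := by
              have := IH a' (by omega) a' 0 i (by omega) (by omega)
              exact this
            rw [Nat.cast_zero] at h0
            rw [h0, Fp_b_zero, Fp_b_zero]
    | succ b' =>
        by_cases htop : b' + 1 = a + j + 1
        · rw [Gm_void j (a+(b'+1)) (b'+1) i (by omega), Fp_void j a (b'+1) i htop]
        · have hb2 : b' + 1 ≤ a + j := by omega
          cases a with
          | zero =>
              simp only [Nat.cast_zero, Nat.zero_add]
              rw [Gm_allTrue j (b'+1) i (by omega) (by omega), Fp_a0 j (b'+1) i (by omega)]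
          | succ a'' =>
              rw [show a''+1+(b'+1) = ((a''+1)+b')+1 from rfl]
              rw [Gm_split j ((a''+1)+b') (b'+1) i]
              rw [show (a''+1)+b' = (a''+b')+1 from by omega]
              rw [trueBranch j (a''+b') b' i (by omega)]
              have I1 : Gm j ((a''+b')+1) (b'+1) i = Fp j (a'':ℤ) ((b'+1:ℕ):ℤ) i := by
                have := IH (a'' + (b'+1)) (by omega) a'' (b'+1) i rfl (by omega)
                exact this
              have I2 : Gm j (a''+b') b' (i-1) = Fp j (a'':ℤ) (b':ℤ) (i-1) := by
                have := IH (a''+b') (by omega) a'' b' (i-1) rfl (by omega)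
                exact this
              have I3 : Gm j ((a''+b')+1) b' i = Fp j ((a''+1:ℕ):ℤ) (b':ℤ) i := by
                have := IH ((a''+1)+b') (by omega) (a''+1) b' i rfl (by omega)
                rwa [show (a''+1)+b' = (a''+b')+1 from by omega] at this
              have I4 : Gm j (a''+b') b' i = Fp j (a'':ℤ) (b':ℤ) i := by
                have := IH (a''+b') (by omega) a'' b' i rfl (by omega)
                exact this
              rw [I1, I2, I3, I4]
              have FR := Frec j (a''+1) (b'+1) (by omega) (by omega) i
              rw [show ((a''+1:ℕ):ℤ) - 1 = (a'':ℤ) from by push_cast; ring,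
                  show ((b'+1:ℕ):ℤ) - 1 = (b':ℤ) from by push_cast; ring,
                  show (a''+1) + (b'+1) - 1 = (a''+b')+1 from by omega] at FR
              rw [FR]
              ring


/-! Part C : bijection between SYT of shape (n,k)/(j) and ballot words -/

section PartC

variable {m : ℕ}

lemma wrd_val (w : Fin m → Bool) (v : Fin m) : wrd w (v : ℕ) = w v := by
  unfold wrd
  rw [dif_pos v.isLt]

lemma cntT_zero (w : Fin m → Bool) : cntT w 0 = 0 := by
  unfold cntT; simp

lemma cntT_eq_fin (w : Fin m → Bool) (p : ℕ) (hp : p ≤ m) :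
    cntT w p = (Finset.univ.filter (fun u : Fin m => (u : ℕ) < p ∧ w u = true)).card := by
  unfold cntT
  apply Finset.card_bij (fun (x : ℕ) _ => (⟨x, by
    rename_i hx
    rw [Finset.mem_filter, Finset.mem_range] at hx
    omega⟩ : Fin m))
  · intro x hx
    rw [Finset.mem_filter, Finset.mem_range] at hx
    rw [Finset.mem_filter]
    refine ⟨Finset.mem_univ _, hx.1, ?_⟩
    have hx2 := hx.2
    unfold wrd at hx2
    rw [dif_pos (show x < m by omega)] at hx2
    exact hx2
  · intro x hx y hy hxy
    have := congrArg Fin.val hxy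
    simpa using this
  · intro u hu
    rw [Finset.mem_filter] at hu
    refine ⟨(u : ℕ), ?_, by simp⟩
    rw [Finset.mem_filter, Finset.mem_range]
    exact ⟨hu.2.1, by rw [wrd_val]; exact hu.2.2⟩

lemma cntF_eq_fin (w : Fin m → Bool) (p : ℕ) (hp : p ≤ m) :
    cntF w p = (Finset.univ.filter (fun u : Fin m => (u : ℕ) < p ∧ w u = false)).card := by
  unfold cntF
  apply Finset.card_bij (fun (x : ℕ) _ => (⟨x, by
    rename_i hx
    rw [Finset.mem_filter, Finset.mem_range] at hx
    omega⟩ : Fin m))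
  · intro x hx
    rw [Finset.mem_filter, Finset.mem_range] at hx
    rw [Finset.mem_filter]
    refine ⟨Finset.mem_univ _, hx.1, ?_⟩
    have hx2 := hx.2
    unfold wrd at hx2
    rw [dif_pos (show x < m by omega)] at hx2
    exact hx2
  · intro x hx y hy hxy
    have := congrArg Fin.val hxy
    simpa using this
  · intro u hu
    rw [Finset.mem_filter] at hu
    refine ⟨(u : ℕ), ?_, by simp⟩
    rw [Finset.mem_filter, Finset.mem_range]
    exact ⟨hu.2.1, by rw [wrd_val]; exact hu.2.2⟩

lemma cntT_lt_of_true (w : Fin m → Bool) {u v : Fin m} (huv : (u:ℕ) < (v:ℕ))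
    (hu : w u = true) : cntT w (u:ℕ) < cntT w (v:ℕ) := by
  have h1 : cntT w ((u:ℕ)+1) = cntT w (u:ℕ) + 1 := by
    rw [cntT_succ, wrd_val, hu]; simp
  have h2 : cntT w ((u:ℕ)+1) ≤ cntT w (v:ℕ) := cntT_mono w (by omega)
  omega

lemma cntF_lt_of_false (w : Fin m → Bool) {u v : Fin m} (huv : (u:ℕ) < (v:ℕ))
    (hu : w u = false) : cntF w (u:ℕ) < cntF w (v:ℕ) := by
  have h1 : cntF w ((u:ℕ)+1) = cntF w (u:ℕ) + 1 := by
    rw [cntF_succ, wrd_val, hu]; simp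
  have h2 : cntF w ((u:ℕ)+1) ≤ cntF w (v:ℕ) := cntF_mono w (by omega)
  omega

end PartC

section Shape

variable (n k j : ℕ)

lemma mem_S (hkn : k ≤ n) (p : ℕ × ℕ) :
    p ∈ skewCells [n,k] [j] ↔ (p.1 = 0 ∧ j ≤ p.2 ∧ p.2 < n) ∨ (p.1 = 1 ∧ p.2 < k) := by
  unfold skewCells
  rw [Finset.mem_filter, Finset.mem_product, Finset.mem_range, Finset.mem_range]
  have hfold : [n,k].foldr max 0 = max n (max k 0) := rfl
  have hmax : max n (max k 0) = n := by
    rw [Nat.max_eq_left (Nat.zero_le k), Nat.max_eq_left hkn]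
  rw [hfold, hmax]
  have hlen : [n,k].length = 2 := rfl
  rw [hlen]
  constructor
  · rintro ⟨⟨h1, h2⟩, h3, h4⟩
    rcases (by omega : p.1 = 0 ∨ p.1 = 1) with h | h
    · left
      rw [h] at h3 h4
      exact ⟨h, h3, by simpa using h4⟩
    · right
      rw [h] at h3 h4
      exact ⟨h, by simpa using h4⟩
  · rintro (⟨h1, h2, h3⟩ | ⟨h1, h2⟩)
    · rw [h1]
      exact ⟨⟨by omega, h3⟩, h2, h3⟩
    · rw [h1]
      refine ⟨⟨by omega, by omega⟩, by simpa using Nat.zero_le p.2, by simpa using h2⟩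

lemma card_S (hkn : k ≤ n) (hj : j ≤ n) :
    (skewCells [n,k] [j]).card = (n - j) + k := by
  have hset : skewCells [n,k] [j]
      = (Finset.Ico j n).image (fun c => ((0:ℕ), c))
        ∪ (Finset.range k).image (fun c => ((1:ℕ), c)) := by
    ext p
    rw [mem_S n k j hkn, Finset.mem_union, Finset.mem_image, Finset.mem_image]
    constructor
    · rintro (⟨h1, h2, h3⟩ | ⟨h1, h2⟩)
      · left
        exact ⟨p.2, Finset.mem_Ico.mpr ⟨h2, h3⟩, by rw [← h1]⟩
      · right
        exact ⟨p.2, Finset.mem_range.mpr h2, by rw [← h1]⟩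
    · rintro (⟨c, hc, rfl⟩ | ⟨c, hc, rfl⟩)
      · rw [Finset.mem_Ico] at hc
        left; exact ⟨rfl, hc.1, hc.2⟩
      · rw [Finset.mem_range] at hc
        right; exact ⟨rfl, hc⟩
  rw [hset, Finset.card_union_of_disjoint, Finset.card_image_of_injective,
    Finset.card_image_of_injective, Nat.card_Ico, Finset.card_range]
  · intro x y hxy; simpa using hxy
  · intro x y hxy; simpa using hxy
  · rw [Finset.disjoint_left]
    rintro p hp hq
    rw [Finset.mem_image] at hp hq
    obtain ⟨c, -, rfl⟩ := hp
    obtain ⟨d, -, he⟩ := hq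
    exact absurd (congrArg Prod.fst he) (by simp)

end Shape

section PartD

variable {n k j : ℕ}

/-- the word read off a tableau: letter of entry `v+1` is `true` iff it is in row 1 -/
def wOf (pos : Fin (skewCells [n,k] [j]).card → ↥(skewCells [n,k] [j])) :
    Fin (skewCells [n,k] [j]).card → Bool :=
  fun v => decide ((pos v : ℕ × ℕ).1 = 1)

/-- the cell of entry `v+1` determined by a word -/
def posExpr (j : ℕ) {m : ℕ} (w : Fin m → Bool) (v : Fin m) : ℕ × ℕ :=
  if w v = true then (1, cntT w (v:ℕ)) else (0, j + cntF w (v:ℕ))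

lemma row01 (hkn : k ≤ n) (c : ↥(skewCells [n,k] [j])) :
    ((c : ℕ × ℕ).1 = 0 ∧ j ≤ (c:ℕ×ℕ).2 ∧ (c:ℕ×ℕ).2 < n)
      ∨ ((c:ℕ×ℕ).1 = 1 ∧ (c:ℕ×ℕ).2 < k) :=
  (mem_S n k j hkn _).mp c.2

lemma pos_bij (pos : Fin (skewCells [n,k] [j]).card → ↥(skewCells [n,k] [j]))
    (hpos : IsSYT [n,k] [j] pos) : Function.Bijective pos :=
  (Fintype.bijective_iff_injective_and_card pos).mpr
    ⟨hpos.1, by rw [Fintype.card_coe, Fintype.card_fin]⟩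

lemma pos_surj (pos : Fin (skewCells [n,k] [j]).card → ↥(skewCells [n,k] [j]))
    (hpos : IsSYT [n,k] [j] pos) (c : ℕ × ℕ) (hc : c ∈ skewCells [n,k] [j]) :
    ∃ u, (pos u : ℕ × ℕ) = c := by
  obtain ⟨u, hu⟩ := (pos_bij pos hpos).2 ⟨c, hc⟩
  exact ⟨u, by rw [hu]⟩

lemma rowT (hkn : k ≤ n) (pos : Fin (skewCells [n,k] [j]).card → ↥(skewCells [n,k] [j]))
    (hpos : IsSYT [n,k] [j] pos) (v : Fin (skewCells [n,k] [j]).card)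
    (hv : (pos v : ℕ×ℕ).1 = 1) :
    (pos v : ℕ×ℕ).2 = cntT (wOf pos) (v:ℕ) := by
  rw [cntT_eq_fin _ _ (le_of_lt v.isLt)]
  have key : (Finset.univ.filter
        (fun u : Fin (skewCells [n,k] [j]).card => (u:ℕ) < (v:ℕ) ∧ wOf pos u = true)).card
      = (Finset.range ((pos v : ℕ×ℕ).2)).card := by
    apply Finset.card_bij (fun u _ => (pos u : ℕ×ℕ).2)
    · intro u hu
      rw [Finset.mem_filter] at hu
      obtain ⟨-, huv, hu1⟩ := hu
      have hrow : (pos u : ℕ×ℕ).1 = 1 := by simpa [wOf] using hu1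
      rw [Finset.mem_range]
      rcases Nat.lt_trichotomy ((pos u : ℕ×ℕ).2) ((pos v : ℕ×ℕ).2) with h | h | h
      · exact h
      · exfalso
        have he : pos u = pos v := Subtype.ext (Prod.ext (by rw [hrow, hv]) h)
        have := congrArg Fin.val (hpos.1 he)
        omega
      · exfalso
        have hlt : v < u := hpos.2.1 v u (by rw [hrow, hv]) h
        have : (v:ℕ) < (u:ℕ) := hlt
        omega
    · intro u1 h1 u2 h2 he
      rw [Finset.mem_filter] at h1 h2
      have r1 : (pos u1 : ℕ×ℕ).1 = 1 := by simpa [wOf] using h1.2.2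
      have r2 : (pos u2 : ℕ×ℕ).1 = 1 := by simpa [wOf] using h2.2.2
      exact hpos.1 (Subtype.ext (Prod.ext (by rw [r1, r2]) he))
    · intro c hc
      rw [Finset.mem_range] at hc
      have hcv : c < k := by
        have hvk : (pos v : ℕ×ℕ).2 < k := by
          rcases row01 hkn (pos v) with h | h
          · omega
          · exact h.2
        omega
      obtain ⟨u, hu⟩ := pos_surj pos hpos (1, c) ((mem_S n k j hkn _).mpr (Or.inr ⟨rfl, hcv⟩))
      refine ⟨u, ?_, by rw [hu]⟩
      rw [Finset.mem_filter]
      have hlt : u < v := hpos.2.1 u v (by rw [hu, hv]) (by rw [hu]; exact hc)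
      exact ⟨Finset.mem_univ _, hlt, by simp [wOf, hu]⟩
  rw [key, Finset.card_range]

lemma rowF (hkn : k ≤ n) (pos : Fin (skewCells [n,k] [j]).card → ↥(skewCells [n,k] [j]))
    (hpos : IsSYT [n,k] [j] pos) (v : Fin (skewCells [n,k] [j]).card)
    (hv : (pos v : ℕ×ℕ).1 = 0) :
    (pos v : ℕ×ℕ).2 = j + cntF (wOf pos) (v:ℕ) := by
  have hcol : j ≤ (pos v : ℕ×ℕ).2 ∧ (pos v : ℕ×ℕ).2 < n := by
    rcases row01 hkn (pos v) with h | h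
    · exact ⟨h.2.1, h.2.2⟩
    · omega
  have key : (Finset.univ.filter
        (fun u : Fin (skewCells [n,k] [j]).card => (u:ℕ) < (v:ℕ) ∧ wOf pos u = false)).card
      = (Finset.Ico j ((pos v : ℕ×ℕ).2)).card := by
    apply Finset.card_bij (fun u _ => (pos u : ℕ×ℕ).2)
    · intro u hu
      rw [Finset.mem_filter] at hu
      obtain ⟨-, huv, hu1⟩ := hu
      have hrow : (pos u : ℕ×ℕ).1 = 0 := by
        rcases row01 hkn (pos u) with h | h
        · exact h.1
        · exfalso; simp [wOf, h.1] at hu1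
      rw [Finset.mem_Ico]
      refine ⟨?_, ?_⟩
      · rcases row01 hkn (pos u) with h | h
        · exact h.2.1
        · omega
      · rcases Nat.lt_trichotomy ((pos u : ℕ×ℕ).2) ((pos v : ℕ×ℕ).2) with h | h | h
        · exact h
        · exfalso
          have he : pos u = pos v := Subtype.ext (Prod.ext (by rw [hrow, hv]) h)
          have := congrArg Fin.val (hpos.1 he)
          omega
        · exfalso
          have hlt : v < u := hpos.2.1 v u (by rw [hrow, hv]) h
          have : (v:ℕ) < (u:ℕ) := hlt
          omega
    · intro u1 h1 u2 h2 he
      rw [Finset.mem_filter] at h1 h2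
      have r1 : (pos u1 : ℕ×ℕ).1 = 0 := by
        rcases row01 hkn (pos u1) with h | h
        · exact h.1
        · exfalso; simp [wOf, h.1] at h1
      have r2 : (pos u2 : ℕ×ℕ).1 = 0 := by
        rcases row01 hkn (pos u2) with h | h
        · exact h.1
        · exfalso; simp [wOf, h.1] at h2
      exact hpos.1 (Subtype.ext (Prod.ext (by rw [r1, r2]) he))
    · intro c hc
      rw [Finset.mem_Ico] at hc
      obtain ⟨u, hu⟩ := pos_surj pos hpos (0, c)
        ((mem_S n k j hkn _).mpr (Or.inl ⟨rfl, hc.1, by omega⟩))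
      refine ⟨u, ?_, by rw [hu]⟩
      rw [Finset.mem_filter]
      have hlt : u < v := hpos.2.1 u v (by rw [hu, hv]) (by rw [hu]; exact hc.2)
      exact ⟨Finset.mem_univ _, hlt, by simp [wOf, hu]⟩
  rw [cntF_eq_fin _ _ (le_of_lt v.isLt), key, Nat.card_Ico]
  omega

/-- the word of a tableau has exactly `k` ones -/
lemma cnt_top (hkn : k ≤ n)
    (pos : Fin (skewCells [n,k] [j]).card → ↥(skewCells [n,k] [j]))
    (hpos : IsSYT [n,k] [j] pos) :
    cntT (wOf pos) ((skewCells [n,k] [j]).card) = k := by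
  rw [cntT_eq_fin _ _ le_rfl]
  have key : (Finset.univ.filter
        (fun u : Fin (skewCells [n,k] [j]).card =>
          (u:ℕ) < (skewCells [n,k] [j]).card ∧ wOf pos u = true)).card
      = (Finset.range k).card := by
    apply Finset.card_bij (fun u _ => (pos u : ℕ×ℕ).2)
    · intro u hu
      rw [Finset.mem_filter] at hu
      have hrow : (pos u : ℕ×ℕ).1 = 1 := by simpa [wOf] using hu.2.2
      rw [Finset.mem_range]
      rcases row01 hkn (pos u) with h | h
      · omega
      · exact h.2
    · intro u1 h1 u2 h2 he
      rw [Finset.mem_filter] at h1 h2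
      have r1 : (pos u1 : ℕ×ℕ).1 = 1 := by simpa [wOf] using h1.2.2
      have r2 : (pos u2 : ℕ×ℕ).1 = 1 := by simpa [wOf] using h2.2.2
      exact hpos.1 (Subtype.ext (Prod.ext (by rw [r1, r2]) he))
    · intro c hc
      rw [Finset.mem_range] at hc
      obtain ⟨u, hu⟩ := pos_surj pos hpos (1, c) ((mem_S n k j hkn _).mpr (Or.inr ⟨rfl, hc⟩))
      refine ⟨u, ?_, by rw [hu]⟩
      rw [Finset.mem_filter]
      exact ⟨Finset.mem_univ _, u.isLt, by simp [wOf, hu]⟩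
  rw [key, Finset.card_range]

/-- the word of a tableau satisfies the ballot condition -/
lemma condC (hkn : k ≤ n)
    (pos : Fin (skewCells [n,k] [j]).card → ↥(skewCells [n,k] [j]))
    (hpos : IsSYT [n,k] [j] pos) : condW j (wOf pos) := by
  intro p
  induction p with
  | zero => intro _; rw [cntT_zero]; omega
  | succ p ih =>
      intro hp
      have hp' : p ≤ (skewCells [n,k] [j]).card := by omega
      have IH := ih hp'
      cases hc : wrd (wOf pos) p with
      | false =>
          rw [cntT_succ, cntF_succ, hc]
          simp
          omega
      | true =>
          rw [cntT_succ, cntF_succ, hc]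
          simp
          have hpM : p < (skewCells [n,k] [j]).card := by omega
          have hwb : wOf pos ⟨p, hpM⟩ = true := by
            rw [← wrd_val (wOf pos) ⟨p, hpM⟩]; exact hc
          have hrowb : (pos ⟨p, hpM⟩ : ℕ×ℕ).1 = 1 := by simpa [wOf] using hwb
          have hcolb : (pos ⟨p, hpM⟩ : ℕ×ℕ).2 = cntT (wOf pos) p :=
            rowT hkn pos hpos ⟨p, hpM⟩ hrowb
          by_contra hcon
          push_neg at hcon
          have hck : cntT (wOf pos) p < k := by
            rcases row01 hkn (pos ⟨p, hpM⟩) with h | h <;> omega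
          have hcell : ((0:ℕ), cntT (wOf pos) p) ∈ skewCells [n,k] [j] :=
            (mem_S n k j hkn _).mpr (Or.inl ⟨rfl, by omega, by omega⟩)
          obtain ⟨u, hu⟩ := pos_surj pos hpos (0, cntT (wOf pos) p) hcell
          have hub : u < (⟨p, hpM⟩ : Fin (skewCells [n,k] [j]).card) :=
            hpos.2.2 u ⟨p, hpM⟩ (by rw [hu, hcolb]) (by rw [hu, hrowb]; exact Nat.zero_lt_one)
          have hwu : wOf pos u = false := by simp [wOf, hu]
          have hcolu : cntT (wOf pos) p = j + cntF (wOf pos) (u:ℕ) := by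
            have h0 := rowF hkn pos hpos u (by rw [hu])
            rw [hu] at h0
            exact h0
          have h1 : cntF (wOf pos) ((u:ℕ)+1) = cntF (wOf pos) (u:ℕ) + 1 := by
            rw [cntF_succ, wrd_val, hwu]; simp
          have hub' : (u:ℕ) < p := hub
          have h2 : cntF (wOf pos) ((u:ℕ)+1) ≤ cntF (wOf pos) p := cntF_mono _ (by omega)
          omega

/-- descent sets agree -/
lemma des_eq (hkn : k ≤ n)
    (pos : Fin (skewCells [n,k] [j]).card → ↥(skewCells [n,k] [j]))
    (hpos : IsSYT [n,k] [j] pos) :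
    desSet [n,k] [j] pos = desW (wOf pos) := by
  unfold desSet desW
  apply Finset.filter_congr
  intro v hv
  rw [Finset.mem_range] at hv
  constructor
  · rintro ⟨a, b, ha, hb, hlt⟩
    have hva : 1 ≤ v := by omega
    have rowb : (pos b : ℕ×ℕ).1 = 1 := by
      rcases row01 hkn (pos a) with h | h <;> rcases row01 hkn (pos b) with h' | h' <;> omega
    have rowa : (pos a : ℕ×ℕ).1 = 0 := by
      rcases row01 hkn (pos a) with h | h <;> rcases row01 hkn (pos b) with h' | h' <;> omega
    refine ⟨hva, ?_, ?_⟩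
    · unfold wrd
      rw [dif_pos (show v - 1 < (skewCells [n,k] [j]).card by omega)]
      have he : (⟨v-1, by omega⟩ : Fin (skewCells [n,k] [j]).card) = a :=
        Fin.ext (show v - 1 = (a:ℕ) by omega)
      rw [he]
      simp [wOf, rowa]
    · unfold wrd
      rw [dif_pos (show v < (skewCells [n,k] [j]).card from hv)]
      have he : (⟨v, hv⟩ : Fin (skewCells [n,k] [j]).card) = b :=
        Fin.ext (show v = (b:ℕ) by omega)
      rw [he]
      simp [wOf, rowb]
  · rintro ⟨h1, h2, h3⟩
    refine ⟨⟨v-1, by omega⟩, ⟨v, hv⟩, (show v - 1 + 1 = v by omega), rfl, ?_⟩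
    unfold wrd at h2 h3
    rw [dif_pos (show v - 1 < (skewCells [n,k] [j]).card by omega)] at h2
    rw [dif_pos hv] at h3
    have rowa : (pos ⟨v-1, by omega⟩ : ℕ×ℕ).1 = 0 := by
      rcases row01 hkn (pos ⟨v-1, by omega⟩) with h | h
      · exact h.1
      · exfalso; simp [wOf, h.1] at h2
    have rowb : (pos ⟨v, hv⟩ : ℕ×ℕ).1 = 1 := by simpa [wOf] using h3
    rw [rowa, rowb]
    omega

/-- every cell of `posExpr` is a legal cell -/
lemma memCell (hk : 0 < k) (hkn : k ≤ n) (hj : j < n)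
    (w : Fin (skewCells [n,k] [j]).card → Bool)
    (hw1 : cntT w ((skewCells [n,k] [j]).card) = k)
    (v : Fin (skewCells [n,k] [j]).card) :
    posExpr j w v ∈ skewCells [n,k] [j] := by
  have hMcard : (skewCells [n,k] [j]).card = (n-j)+k := card_S n k j hkn (le_of_lt hj)
  unfold posExpr
  by_cases hv : w v = true
  · rw [if_pos hv]
    apply (mem_S n k j hkn _).mpr
    right
    refine ⟨rfl, ?_⟩
    have h1 : cntT w ((v:ℕ)+1) = cntT w (v:ℕ) + 1 := by
      rw [cntT_succ, wrd_val, hv]; simp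
    have h2 : cntT w ((v:ℕ)+1) ≤ cntT w ((skewCells [n,k] [j]).card) := cntT_mono w v.isLt
    omega
  · rw [if_neg hv]
    apply (mem_S n k j hkn _).mpr
    left
    refine ⟨rfl, by omega, ?_⟩
    have hv' : w v = false := by simpa using hv
    have htot := cntT_add_cntF w ((skewCells [n,k] [j]).card)
    have h1 : cntF w ((v:ℕ)+1) = cntF w (v:ℕ) + 1 := by
      rw [cntF_succ, wrd_val, hv']; simp
    have h2 : cntF w ((v:ℕ)+1) ≤ cntF w ((skewCells [n,k] [j]).card) := cntF_mono w v.isLt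
    omega

/-- the tableau built from a word -/
def posOf (hk : 0 < k) (hkn : k ≤ n)
    (w : Fin (skewCells [n,k] [j]).card → Bool) :
    Fin (skewCells [n,k] [j]).card → ↥(skewCells [n,k] [j]) :=
  fun v => if h : posExpr j w v ∈ skewCells [n,k] [j] then ⟨_, h⟩
    else ⟨(1,0), (mem_S n k j hkn _).mpr (Or.inr ⟨rfl, hk⟩)⟩

lemma posOf_val (hk : 0 < k) (hkn : k ≤ n) (hj : j < n)
    (w : Fin (skewCells [n,k] [j]).card → Bool)
    (hw1 : cntT w ((skewCells [n,k] [j]).card) = k)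
    (v : Fin (skewCells [n,k] [j]).card) :
    (posOf hk hkn w v : ℕ×ℕ) = posExpr j w v := by
  unfold posOf
  rw [dif_pos (memCell hk hkn hj w hw1 v)]

lemma posOf_isSYT (hk : 0 < k) (hkn : k ≤ n) (hj : j < n)
    (w : Fin (skewCells [n,k] [j]).card → Bool)
    (hw1 : cntT w ((skewCells [n,k] [j]).card) = k)
    (hw2 : condW j w) :
    IsSYT [n,k] [j] (posOf hk hkn w) := by
  have hval := posOf_val hk hkn hj w hw1
  refine ⟨?_, ?_, ?_⟩
  · -- injective
    intro u v huv
    have h : posExpr j w u = posExpr j w v := by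
      rw [← hval u, ← hval v, huv]
    unfold posExpr at h
    apply Fin.ext
    by_cases hu : w u = true <;> by_cases hvv : w v = true
    · rw [if_pos hu, if_pos hvv] at h
      rw [Prod.ext_iff] at h
      have hc : cntT w (u:ℕ) = cntT w (v:ℕ) := h.2
      by_contra hne
      rcases Nat.lt_or_ge (u:ℕ) (v:ℕ) with hlt | hge
      · have := cntT_lt_of_true w hlt hu; omega
      · have hlt : (v:ℕ) < (u:ℕ) := by omega
        have := cntT_lt_of_true w hlt hvv; omega
    · rw [if_pos hu, if_neg hvv] at h
      exact absurd (congrArg Prod.fst h) (by simp)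
    · rw [if_neg hu, if_pos hvv] at h
      exact absurd (congrArg Prod.fst h) (by simp)
    · rw [if_neg hu, if_neg hvv] at h
      rw [Prod.ext_iff] at h
      have hu' : w u = false := by simpa using hu
      have hv' : w v = false := by simpa using hvv
      have hc : cntF w (u:ℕ) = cntF w (v:ℕ) := by have := h.2; omega
      by_contra hne
      rcases Nat.lt_or_ge (u:ℕ) (v:ℕ) with hlt | hge
      · have := cntF_lt_of_false w hlt hu'; omega
      · have hlt : (v:ℕ) < (u:ℕ) := by omega
        have := cntF_lt_of_false w hlt hv'; omega
  · -- row condition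
    intro a b hrow hcol
    rw [hval a, hval b] at hrow hcol
    unfold posExpr at hrow hcol
    show (a:ℕ) < (b:ℕ)
    by_cases ha : w a = true <;> by_cases hb : w b = true
    · rw [if_pos ha, if_pos hb] at hcol
      simp only at hcol
      by_contra hab
      have hba : (b:ℕ) ≤ (a:ℕ) := by omega
      rcases Nat.eq_or_lt_of_le hba with he | hlt
      · rw [show b = a from Fin.ext he] at hcol; omega
      · have := cntT_lt_of_true w hlt hb; omega
    · rw [if_pos ha, if_neg hb] at hrow; simp at hrow
    · rw [if_neg ha, if_pos hb] at hrow; simp at hrow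
    · rw [if_neg ha, if_neg hb] at hcol
      simp only at hcol
      have ha' : w a = false := by simpa using ha
      have hb' : w b = false := by simpa using hb
      by_contra hab
      have hba : (b:ℕ) ≤ (a:ℕ) := by omega
      rcases Nat.eq_or_lt_of_le hba with he | hlt
      · rw [show b = a from Fin.ext he] at hcol; omega
      · have := cntF_lt_of_false w hlt hb'; omega
  · -- column condition
    intro a b hcol hrowlt
    rw [hval a, hval b] at hcol hrowlt
    unfold posExpr at hcol hrowlt
    show (a:ℕ) < (b:ℕ)
    by_cases ha : w a = true <;> by_cases hb : w b = true
    · rw [if_pos ha, if_pos hb] at hrowlt; simp at hrowlt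
    · rw [if_pos ha, if_neg hb] at hrowlt; simp at hrowlt
    · -- the real case : a in row 0, b in row 1
      rw [if_neg ha, if_pos hb] at hcol
      simp only at hcol
      have ha' : w a = false := by simpa using ha
      have hcond := hw2 ((b:ℕ)+1) b.isLt
      have hsb : cntT w ((b:ℕ)+1) = cntT w (b:ℕ) + 1 := by
        rw [cntT_succ, wrd_val, hb]; simp
      by_contra hab
      have hba : (b:ℕ) ≤ (a:ℕ) := by omega
      have hne : (a:ℕ) ≠ (b:ℕ) := fun he => by
        rw [show a = b from Fin.ext he, hb] at ha'; simp at ha'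
      have hblta : (b:ℕ)+1 ≤ (a:ℕ) := by omega
      have h2 : cntF w ((b:ℕ)+1) ≤ cntF w (a:ℕ) := cntF_mono w hblta
      omega
    · rw [if_neg ha, if_neg hb] at hrowlt; simp at hrowlt

lemma wOf_posOf (hk : 0 < k) (hkn : k ≤ n) (hj : j < n)
    (w : Fin (skewCells [n,k] [j]).card → Bool)
    (hw1 : cntT w ((skewCells [n,k] [j]).card) = k) :
    wOf (posOf hk hkn w) = w := by
  funext v
  unfold wOf
  rw [posOf_val hk hkn hj w hw1 v]
  unfold posExpr
  cases hv : w v <;> simp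

lemma posOf_wOf (hk : 0 < k) (hkn : k ≤ n) (hj : j < n)
    (pos : Fin (skewCells [n,k] [j]).card → ↥(skewCells [n,k] [j]))
    (hpos : IsSYT [n,k] [j] pos) :
    posOf hk hkn (wOf pos) = pos := by
  funext v
  have hPOS : (pos v : ℕ×ℕ) = posExpr j (wOf pos) v := by
    unfold posExpr
    rcases row01 hkn (pos v) with h | h
    · rw [if_neg (by simp [wOf, h.1])]
      exact Prod.ext h.1 (rowF hkn pos hpos v h.1)
    · rw [if_pos (by simp [wOf, h.1])]
      exact Prod.ext h.1 (rowT hkn pos hpos v h.1)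
  unfold posOf
  rw [dif_pos (hPOS ▸ (pos v).2)]
  exact Subtype.ext hPOS.symm

/-- the bridge : `fSkew` equals the word generating function -/
lemma bridge (hk : 0 < k) (hkn : k ≤ n) (hj : j < n) (i : ℕ) :
    fSkew [n,k] [j] i = Gm j ((skewCells [n,k] [j]).card) k i := by
  unfold fSkew SYTs Gm
  rw [Finset.filter_filter]
  refine Finset.sum_nbij' (fun pos => wOf pos) (fun w => posOf hk hkn w)
    ?_ ?_ ?_ ?_ ?_
  · intro pos hpos
    rw [Finset.mem_filter] at hpos ⊢
    obtain ⟨-, hsyt, hdes⟩ := hpos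
    refine ⟨Finset.mem_univ _, cnt_top hkn pos hsyt, condC hkn pos hsyt, ?_⟩
    rw [← des_eq hkn pos hsyt]
    exact hdes
  · intro w hw
    rw [Finset.mem_filter] at hw ⊢
    obtain ⟨-, hw1, hw2, hw3⟩ := hw
    have hsyt := posOf_isSYT hk hkn hj w hw1 hw2
    refine ⟨Finset.mem_univ _, hsyt, ?_⟩
    unfold desStat
    rw [des_eq hkn _ hsyt, wOf_posOf hk hkn hj w hw1]
    exact hw3
  · intro pos hpos
    rw [Finset.mem_filter] at hpos
    exact posOf_wOf hk hkn hj pos hpos.2.1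
  · intro w hw
    rw [Finset.mem_filter] at hw
    exact wOf_posOf hk hkn hj w hw.2.1
  · intro pos hpos
    rw [Finset.mem_filter] at hpos
    unfold majStat
    rw [des_eq hkn pos hpos.2.1]

end PartD

end Stmt5

/-- For integers `n ≥ k > 0`, `0 ≤ j < n`, `i ≥ 1`,
`f_{(n,k)∖(j),i}(q) = q^{i²} · ([n-j choose i]_q [k choose i]_q
  - [n+1 choose i]_q [k-j-1 choose i]_q)`. -/
theorem stmt5 (n k j i : ℕ) (hk : 0 < k) (hkn : k ≤ n) (hj : j < n) (hi : 1 ≤ i) :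
    fSkew [n, k] [j] i =
      X ^ (i ^ 2) *
        (qBinom ((n : ℤ) - j) i * qBinom k i -
          qBinom ((n : ℤ) + 1) i * qBinom ((k : ℤ) - j - 1) i) := by
  rw [Stmt5.bridge hk hkn hj i, Stmt5.card_S n k j hkn (le_of_lt hj)]
  rw [Stmt5.LemW j ((n-j)+k) (n-j) k i rfl (by omega)]
  unfold Stmt5.Fp Stmt5.qBn
  have e1 : ((n-j : ℕ) : ℤ) = (n:ℤ) - (j:ℤ) := Nat.cast_sub (le_of_lt hj)
  rw [e1]
  have e2 : (n:ℤ) - (j:ℤ) + (j:ℤ) + 1 = (n:ℤ) + 1 := by ring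
  rw [e2]
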